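/- Let a < b be reals, λ ∈ [0,1), μ ∈ (0,1), p = (λ + (1-λ)μ)/(1+λ), α(λ) = (1+λ)/(1-λ), and θ̃(t) = exp(t·((1-μ)a + μb) + (t²/2)·α(λ)·(b-a)²/4). Then for every t ∈ ℝ, θ̃(t)² - (1+λ)[(1-p)e^{ta} + p e^{tb}] θ̃(t) + λ e^{t(a+b)} ≥ 0. -/

import Mathlib

open Real Set

/-- Monotonicity from a pointwise derivative bound on `Ici a`. -/
private lemma le_of_hasDerivAt_nonneg {a : ℝ} {f f' : ℝ → ℝ}
    (hd : ∀ x, HasDerivAt f (f' x) x) (h0 : ∀ x, a ≤ x → 0 ≤ f' x)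
    {x y : ℝ} (hax : a ≤ x) (hxy : x ≤ y) : f x ≤ f y := by
  have hmono : MonotoneOn f (Ici a) := by
    apply monotoneOn_of_deriv_nonneg (convex_Ici a)
    · exact fun z _ => (hd z).continuousAt.continuousWithinAt
    · exact fun z _ => (hd z).differentiableAt.differentiableWithinAt
    · intro z hz
      rw [interior_Ici] at hz
      rw [(hd z).deriv]
      exact h0 z (le_of_lt hz)
  exact hmono hax (le_trans hax hxy) hxy

/-- `sinh x ≤ x * cosh x` for `0 ≤ x`. -/
private lemma sinh_le_mul_cosh {x : ℝ} (hx : 0 ≤ x) : Real.sinh x ≤ x * Real.cosh x := by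
  have hd : ∀ z : ℝ, HasDerivAt (fun y => y * Real.cosh y - Real.sinh y)
      (1 * Real.cosh z + z * Real.sinh z - Real.cosh z) z := fun z =>
    ((hasDerivAt_id z).mul (Real.hasDerivAt_cosh z)).sub (Real.hasDerivAt_sinh z)
  have h0 : ∀ z : ℝ, 0 ≤ z → 0 ≤ 1 * Real.cosh z + z * Real.sinh z - Real.cosh z := by
    intro z hz
    have := mul_nonneg hz (Real.sinh_nonneg_iff.mpr hz)
    nlinarith
  have h := le_of_hasDerivAt_nonneg hd h0 (le_refl (0:ℝ)) hx
  simp only [Real.cosh_zero, Real.sinh_zero, zero_mul, sub_zero, mul_zero] at h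
  linarith

/-- Chord bound for sinh: `v * sinh s ≤ s * sinh v` for `0 ≤ s ≤ v`. -/
private lemma sinh_chord {s v : ℝ} (hs : 0 ≤ s) (hsv : s ≤ v) :
    v * Real.sinh s ≤ s * Real.sinh v := by
  have hd : ∀ z : ℝ, HasDerivAt (fun y => s * Real.sinh y - y * Real.sinh s)
      (s * Real.cosh z - (1 * Real.sinh s + z * 0)) z := fun z =>
    ((Real.hasDerivAt_sinh z).const_mul s).sub
      ((hasDerivAt_id z).mul (hasDerivAt_const z (Real.sinh s)))
  have h0 : ∀ z : ℝ, s ≤ z → 0 ≤ s * Real.cosh z - (1 * Real.sinh s + z * 0) := by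
    intro z hz
    have h1 : Real.sinh s ≤ s * Real.cosh s := sinh_le_mul_cosh hs
    have h2 : Real.cosh s ≤ Real.cosh z := by
      rw [Real.cosh_le_cosh, abs_of_nonneg hs, abs_of_nonneg (hs.trans hz)]
      exact hz
    have h3 : s * Real.cosh s ≤ s * Real.cosh z := mul_le_mul_of_nonneg_left h2 hs
    nlinarith
  have h := le_of_hasDerivAt_nonneg hd h0 (le_refl s) hsv
  nlinarith [h]

/-- Two-point Hoeffding lemma in hyperbolic form. -/
private lemma hoeffding_cosh {m : ℝ} (hm1 : -1 ≤ m) (hm2 : m ≤ 1) {v : ℝ} (hv : 0 ≤ v) :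
    Real.cosh v + m * Real.sinh v ≤ Real.exp (m * v + v ^ 2 / 2) := by
  set C : ℝ → ℝ := fun x => Real.cosh x + m * Real.sinh x with hCdef
  set N : ℝ → ℝ := fun x => Real.sinh x + m * Real.cosh x with hNdef
  have hCpos : ∀ x, 0 < C x := by
    intro x
    rcases le_or_gt 0 (Real.sinh x) with h | h
    · have h1 := Real.cosh_sub_sinh x
      have h2 := Real.exp_pos (-x)
      simp only [hCdef]
      nlinarith
    · have h1 := Real.cosh_add_sinh x
      have h2 := Real.exp_pos x
      simp only [hCdef]
      nlinarith
  have hC : ∀ x, HasDerivAt C (N x) x := fun x =>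
    (Real.hasDerivAt_cosh x).add ((Real.hasDerivAt_sinh x).const_mul m)
  have hN : ∀ x, HasDerivAt N (C x) x := fun x =>
    (Real.hasDerivAt_sinh x).add ((Real.hasDerivAt_cosh x).const_mul m)
  set g : ℝ → ℝ := fun x => m + x - N x / C x with hgdef
  have hg' : ∀ x, HasDerivAt g (1 - (C x * C x - N x * N x) / C x ^ 2) x := by
    intro x
    have h1 : HasDerivAt (fun y : ℝ => m + y) (0 + 1) x :=
      (hasDerivAt_const x m).add (hasDerivAt_id x)
    have h2 : HasDerivAt (fun y => N y / C y) ((C x * C x - N x * N x) / C x ^ 2) x :=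
      (hN x).div (hC x) (hCpos x).ne'
    have h3 := h1.sub h2
    rw [show (1:ℝ) - (C x * C x - N x * N x) / C x ^ 2 = 0 + 1 - (C x * C x - N x * N x) / C x ^ 2 by norm_num]
    exact h3
  have hg'nonneg : ∀ x, 0 ≤ 1 - (C x * C x - N x * N x) / C x ^ 2 := by
    intro x
    have hc := hCpos x
    have h1 : (C x * C x - N x * N x) / C x ^ 2 ≤ 1 := by
      rw [div_le_one (by positivity)]
      nlinarith [sq_nonneg (N x)]
    linarith
  have hg0 : g 0 = 0 := by
    simp [hgdef, hNdef, hCdef]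
  have hgnonneg : ∀ x, 0 ≤ x → 0 ≤ g x := by
    intro x hx
    have := le_of_hasDerivAt_nonneg hg' (fun z _ => hg'nonneg z) (le_refl (0:ℝ)) hx
    rwa [hg0] at this
  have hf : ∀ x, HasDerivAt (fun y => m * y + y ^ 2 / 2 - Real.log (C y)) (g x) x := by
    intro x
    have h1 : HasDerivAt (fun y : ℝ => m * y) (m * 1) x := (hasDerivAt_id x).const_mul m
    have h2 : HasDerivAt (fun y : ℝ => y ^ 2 / 2) ((2 : ℕ) * x ^ (2 - 1) / 2) x :=
      (hasDerivAt_pow 2 x).div_const 2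
    have h3 : HasDerivAt (fun y => Real.log (C y)) (N x / C x) x := (hC x).log (hCpos x).ne'
    have h4 := (h1.add h2).sub h3
    have h5 : m * 1 + ((2:ℕ):ℝ) * x ^ (2 - 1) / 2 - N x / C x = g x := by
      simp only [hgdef]; push_cast; ring
    rw [← h5]
    exact h4
  have hfv := le_of_hasDerivAt_nonneg hf hgnonneg (le_refl (0:ℝ)) hv
  have h00 : m * 0 + (0:ℝ) ^ 2 / 2 - Real.log (C 0) = 0 := by
    simp [hCdef]
  have hlog : Real.log (C v) ≤ m * v + v ^ 2 / 2 := by linarith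
  calc C v = Real.exp (Real.log (C v)) := (Real.exp_log (hCpos v)).symm
    _ ≤ Real.exp (m * v + v ^ 2 / 2) := Real.exp_le_exp.mpr hlog

set_option maxHeartbeats 1600000 in
/-- Core inequality for nonnegative `v`. -/
private lemma core_nonneg {α m v : ℝ} (hα : 1 ≤ α) (hm1 : -1 ≤ m) (hm2 : m ≤ 1)
    (hv : 0 ≤ v) :
    0 ≤ α * (Real.cosh (m * v + α * v ^ 2 / 2) - Real.cosh v) +
      (Real.sinh (m * v + α * v ^ 2 / 2) - m * Real.sinh v) := by
  have hα0 : (0:ℝ) < α := lt_of_lt_of_le one_pos hα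
  rcases eq_or_lt_of_le hv with hv0 | hv'
  · have hveq : v = 0 := hv0.symm
    subst hveq
    norm_num
  obtain ⟨r, hr⟩ : ∃ r : ℝ, r = m * v + α * v ^ 2 / 2 := ⟨_, rfl⟩
  rw [← hr]
  rcases le_or_gt v r with h1 | h1
  · -- case r ≥ v : both differences nonnegative
    have hc : Real.cosh v ≤ Real.cosh r := by
      rw [Real.cosh_le_cosh, abs_of_nonneg hv, abs_of_nonneg (hv.trans h1)]
      exact h1
    have hs : Real.sinh v ≤ Real.sinh r := Real.sinh_le_sinh.mpr h1
    have hsv : 0 ≤ Real.sinh v := Real.sinh_nonneg_iff.mpr hv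
    have hms : m * Real.sinh v ≤ Real.sinh v := by nlinarith
    nlinarith [mul_nonneg hα0.le (sub_nonneg.mpr hc)]
  rcases le_or_gt r 0 with h2 | h2
  · -- case r ≤ 0
    have hrv : -v ≤ r := by
      have h3 : 0 ≤ (1 + m) * v := mul_nonneg (by linarith) hv
      have h4 : 0 ≤ α * v ^ 2 / 2 := by positivity
      rw [hr]; nlinarith
    have hhalf : Real.sinh (v / 2) ≤ v / 2 * Real.cosh (v / 2) :=
      sinh_le_mul_cosh (by linarith)
    have hs2 : 0 ≤ Real.sinh (v / 2) := Real.sinh_nonneg_iff.mpr (by linarith)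
    have hcoshv : Real.cosh v = 1 + 2 * Real.sinh (v / 2) ^ 2 := by
      conv_lhs => rw [show v = v / 2 + v / 2 by ring]
      rw [Real.cosh_add]
      linear_combination Real.cosh_sq_sub_sinh_sq (v / 2)
    have hsinhv : Real.sinh v = 2 * Real.sinh (v / 2) * Real.cosh (v / 2) := by
      conv_lhs => rw [show v = v / 2 + v / 2 by ring]
      rw [Real.sinh_add]
      ring
    have hF1 : Real.cosh v - 1 ≤ v / 2 * Real.sinh v := by
      rw [hcoshv, hsinhv]
      nlinarith [mul_le_mul_of_nonneg_left hhalf (mul_nonneg (by norm_num : (0:ℝ) ≤ 2) hs2)]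
    have hF2 : r * Real.sinh v ≤ v * Real.sinh r := by
      have h5 := sinh_chord (s := -r) (v := v) (by linarith) (by linarith)
      rw [Real.sinh_neg] at h5
      nlinarith [h5]
    have h1c : (1:ℝ) ≤ Real.cosh r := Real.one_le_cosh r
    have hmv : m * v = r - α * v ^ 2 / 2 := by rw [hr]; ring
    have hvPhi : 0 ≤ v * (α * (Real.cosh r - Real.cosh v) +
        (Real.sinh r - m * Real.sinh v)) := by
      have expand : v * (α * (Real.cosh r - Real.cosh v) + (Real.sinh r - m * Real.sinh v))
          = α * (v * (Real.cosh r - 1)) + α * (v * (v / 2 * Real.sinh v - (Real.cosh v - 1)))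
            + (v * Real.sinh r - r * Real.sinh v) := by
        linear_combination (-Real.sinh v) * hmv
      rw [expand]
      have hA : 0 ≤ α * (v * (Real.cosh r - 1)) :=
        mul_nonneg hα0.le (mul_nonneg hv (by linarith))
      have hB : 0 ≤ α * (v * (v / 2 * Real.sinh v - (Real.cosh v - 1))) :=
        mul_nonneg hα0.le (mul_nonneg hv (by linarith))
      linarith
    nlinarith [hvPhi, hv']
  · -- case 0 < r < v : linear interpolation in m
    have hvne : v ≠ 0 := ne_of_gt hv'
    obtain ⟨mp, hmp⟩ : ∃ x : ℝ, x = r / v - v / 2 := ⟨_, rfl⟩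
    have hmpv : mp * v = r - v ^ 2 / 2 := by
      rw [hmp]; field_simp
    have hαv : α * v ^ 2 = 2 * (r - m * v) := by rw [hr]; ring
    have hmple : m ≤ mp := by
      have hd : mp * v - m * v = (α - 1) * v ^ 2 / 2 := by
        rw [hmpv, hr]; ring
      have h6 : 0 ≤ (α - 1) * v ^ 2 := mul_nonneg (by linarith) (sq_nonneg v)
      have h7 : m * v ≤ mp * v := by linarith
      exact le_of_mul_le_mul_right (by linarith) hv'
    have hmp1 : mp ≤ 1 := by
      have hdiv : r / v ≤ 1 := by rw [div_le_one hv']; linarith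
      rw [hmp]; linarith
    have hmpm1 : -1 ≤ mp := le_trans hm1 hmple
    have E1 : Real.cosh v + mp * Real.sinh v ≤ Real.exp r := by
      have h := hoeffding_cosh hmpm1 hmp1 hv
      have harg : mp * v + v ^ 2 / 2 = r := by linarith [hmpv]
      rwa [harg] at h
    have E2 : 2 * (r + v) * (Real.cosh v - Real.cosh r)
        ≤ v ^ 2 * (Real.sinh v + Real.sinh r) := by
      obtain ⟨P, hP⟩ : ∃ x : ℝ, x = (v + r) / 2 := ⟨_, rfl⟩
      obtain ⟨Q, hQ⟩ : ∃ x : ℝ, x = (v - r) / 2 := ⟨_, rfl⟩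
      have hPpos : 0 < P := by rw [hP]; linarith
      have hQpos : 0 < Q := by rw [hQ]; linarith
      have hvPQ : v = P + Q := by rw [hP, hQ]; ring
      have hrPQ : r = P - Q := by rw [hP, hQ]; ring
      have idC : Real.cosh v - Real.cosh r = 2 * Real.sinh P * Real.sinh Q := by
        rw [hvPQ, hrPQ, Real.cosh_add, Real.cosh_sub]; ring
      have idS : Real.sinh v + Real.sinh r = 2 * Real.sinh P * Real.cosh Q := by
        rw [hvPQ, hrPQ, Real.sinh_add, Real.sinh_sub]; ring
      have hsQ : Real.sinh Q ≤ Q * Real.cosh Q := sinh_le_mul_cosh hQpos.le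
      have hsP : 0 ≤ Real.sinh P := Real.sinh_nonneg_iff.mpr hPpos.le
      have hcQ : 0 < Real.cosh Q := Real.cosh_pos Q
      have hrv2 : r + v = 2 * P := by rw [hvPQ, hrPQ]; ring
      have hv2 : v ^ 2 = 4 * P * Q + r ^ 2 := by rw [hvPQ, hrPQ]; ring
      rw [idC, idS, hrv2, hv2]
      have key : 8 * P * Real.sinh P * Real.sinh Q ≤ 8 * P * Real.sinh P * (Q * Real.cosh Q) :=
        mul_le_mul_of_nonneg_left hsQ (mul_nonneg (by linarith) hsP)
      nlinarith [mul_nonneg (mul_nonneg (sq_nonneg r) hsP) hcQ.le]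
    rcases le_or_gt (2 * v * (Real.cosh v - Real.cosh r) - v ^ 2 * Real.sinh v) 0 with hK | hK
    · have id_mp : v ^ 2 * (α * (Real.cosh r - Real.cosh v) + (Real.sinh r - m * Real.sinh v))
          = v ^ 2 * ((Real.cosh r + Real.sinh r) - (Real.cosh v + mp * Real.sinh v))
            + (2 * v * (Real.cosh v - Real.cosh r) - v ^ 2 * Real.sinh v) * (m - mp) := by
        linear_combination (Real.cosh r - Real.cosh v) * hαv
          + (-2 * (Real.cosh r - Real.cosh v)) * hmpv
      have hterm : 0 ≤ (2 * v * (Real.cosh v - Real.cosh r) - v ^ 2 * Real.sinh v)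
          * (m - mp) := by
        nlinarith [mul_nonneg (neg_nonneg.2 hK) (sub_nonneg.2 hmple)]
      have hbr : Real.cosh v + mp * Real.sinh v ≤ Real.cosh r + Real.sinh r := by
        rw [Real.cosh_add_sinh]; exact E1
      have hE1' : 0 ≤ v ^ 2 * ((Real.cosh r + Real.sinh r)
          - (Real.cosh v + mp * Real.sinh v)) :=
        mul_nonneg (sq_nonneg v) (by linarith)
      have hW : 0 ≤ v ^ 2 * (α * (Real.cosh r - Real.cosh v) +
          (Real.sinh r - m * Real.sinh v)) := by
        rw [id_mp]; linarith
      have h00 : v ^ 2 * 0 ≤ v ^ 2 * (α * (Real.cosh r - Real.cosh v) +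
          (Real.sinh r - m * Real.sinh v)) := by rw [mul_zero]; exact hW
      exact le_of_mul_le_mul_left h00 (pow_pos hv' 2)
    · have id_m1 : v ^ 2 * (α * (Real.cosh r - Real.cosh v) + (Real.sinh r - m * Real.sinh v))
          = (v ^ 2 * (Real.sinh v + Real.sinh r)
              - 2 * (r + v) * (Real.cosh v - Real.cosh r))
            + (2 * v * (Real.cosh v - Real.cosh r) - v ^ 2 * Real.sinh v) * (m + 1) := by
        linear_combination (Real.cosh r - Real.cosh v) * hαv
      have hterm : 0 ≤ (2 * v * (Real.cosh v - Real.cosh r) - v ^ 2 * Real.sinh v)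
          * (m + 1) :=
        mul_nonneg hK.le (by linarith)
      have hW : 0 ≤ v ^ 2 * (α * (Real.cosh r - Real.cosh v) +
          (Real.sinh r - m * Real.sinh v)) := by
        rw [id_m1]; linarith
      have h00 : v ^ 2 * 0 ≤ v ^ 2 * (α * (Real.cosh r - Real.cosh v) +
          (Real.sinh r - m * Real.sinh v)) := by rw [mul_zero]; exact hW
      exact le_of_mul_le_mul_left h00 (pow_pos hv' 2)

set_option maxHeartbeats 1600000 in
theorem stmt_3 (a b lam mu p t : ℝ) (hab : a < b) (hlam : lam ∈ Set.Ico (0:ℝ) 1)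
    (hmu : mu ∈ Set.Ioo (0:ℝ) 1) (hp : p = (lam + (1 - lam) * mu) / (1 + lam)) :
    (Real.exp (t * ((1 - mu) * a + mu * b) +
        t ^ 2 / 2 * ((1 + lam) / (1 - lam)) * ((b - a) ^ 2 / 4))) ^ 2 -
      (1 + lam) * ((1 - p) * Real.exp (t * a) + p * Real.exp (t * b)) *
        Real.exp (t * ((1 - mu) * a + mu * b) +
          t ^ 2 / 2 * ((1 + lam) / (1 - lam)) * ((b - a) ^ 2 / 4)) +
      lam * Real.exp (t * (a + b)) ≥ 0 := by
  obtain ⟨hl0, hl1⟩ := hlam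
  obtain ⟨hmu0, hmu1⟩ := hmu
  have h1l : (0:ℝ) < 1 - lam := by linarith
  have h1l' : (0:ℝ) < 1 + lam := by linarith
  subst hp
  obtain ⟨α, hαdef⟩ : ∃ x : ℝ, x = (1 + lam) / (1 - lam) := ⟨_, rfl⟩
  rw [← hαdef]
  obtain ⟨v, hvdef⟩ : ∃ x : ℝ, x = t * (b - a) / 2 := ⟨_, rfl⟩
  obtain ⟨m, hmdef⟩ : ∃ x : ℝ, x = 2 * mu - 1 := ⟨_, rfl⟩
  obtain ⟨r, hrdef⟩ : ∃ x : ℝ, x = m * v + α * v ^ 2 / 2 := ⟨_, rfl⟩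
  obtain ⟨c, hcdef⟩ : ∃ x : ℝ, x = Real.exp (t * (a + b) / 2) := ⟨_, rfl⟩
  have hα1 : 1 ≤ α := by
    rw [hαdef, le_div_iff₀ h1l]; linarith
  have hm1 : -1 ≤ m := by rw [hmdef]; linarith
  have hm2 : m ≤ 1 := by rw [hmdef]; linarith
  have hΦ : 0 ≤ α * (Real.cosh r - Real.cosh v) + (Real.sinh r - m * Real.sinh v) := by
    rcases le_or_gt 0 v with hv | hv
    · rw [hrdef]
      exact core_nonneg hα1 hm1 hm2 hv
    · have h := core_nonneg (α := α) (m := -m) (v := -v) hα1 (by linarith) (by linarith)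
        (by linarith)
      rw [show -m * -v + α * (-v) ^ 2 / 2 = r by rw [hrdef]; ring] at h
      simp only [Real.cosh_neg, Real.sinh_neg, neg_mul_neg] at h
      exact h
  have hθ : Real.exp (t * ((1 - mu) * a + mu * b) + t ^ 2 / 2 * α * ((b - a) ^ 2 / 4))
      = c * Real.exp r := by
    rw [hcdef, ← Real.exp_add]
    congr 1
    rw [hrdef, hmdef, hvdef]
    ring
  have ha' : Real.exp (t * a) = c * Real.exp (-v) := by
    rw [hcdef, ← Real.exp_add]
    congr 1
    rw [hvdef]; ring
  have hb' : Real.exp (t * b) = c * Real.exp v := by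
    rw [hcdef, ← Real.exp_add]
    congr 1
    rw [hvdef]; ring
  have hab' : Real.exp (t * (a + b)) = c ^ 2 := by
    rw [hcdef, pow_two, ← Real.exp_add]
    congr 1
    ring
  rw [ge_iff_le, hθ, ha', hb', hab']
  have key : (c * Real.exp r) ^ 2 -
      (1 + lam) * ((1 - (lam + (1 - lam) * mu) / (1 + lam)) * (c * Real.exp (-v)) +
        (lam + (1 - lam) * mu) / (1 + lam) * (c * Real.exp v)) * (c * Real.exp r) +
      lam * c ^ 2
      = c ^ 2 * (Real.exp r * ((1 - lam) *
          (α * (Real.cosh r - Real.cosh v) + (Real.sinh r - m * Real.sinh v)))) := by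
    rw [Real.cosh_eq r, Real.cosh_eq v, Real.sinh_eq r, Real.sinh_eq v,
      Real.exp_neg r, Real.exp_neg v, hαdef, hmdef]
    have hev := (Real.exp_pos v).ne'
    have her := (Real.exp_pos r).ne'
    field_simp
    ring
  rw [key]
  have hfin : 0 ≤ (1 - lam) *
      (α * (Real.cosh r - Real.cosh v) + (Real.sinh r - m * Real.sinh v)) :=
    mul_nonneg h1l.le hΦ
  exact mul_nonneg (by positivity) (mul_nonneg (Real.exp_pos r).le hfin)
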